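/- Let G be a solvable group and H a verbally closed subgroup of G contained in the derived subgroup G'. Then H is trivial. -/

import Mathlib

/-- `H` is a retract of `G`: some endomorphism of `G` with image in `H` fixes `H` pointwise. -/
def IsRetract {G : Type*} [Group G] (H : Subgroup G) : Prop :=
  ∃ ρ : G →* G, (∀ g, ρ g ∈ H) ∧ ∀ h ∈ H, ρ h = h

/-- Evaluation of a word with constants in `H` at an assignment `g` of the variables. -/
def wordEval {G : Type*} [Group G] {n : ℕ} (H : Subgroup G)
    (w : FreeGroup (Fin n ⊕ H)) (g : Fin n → G) : G :=
  FreeGroup.lift (Sum.elim g (fun h : H => (h : G))) w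

/-- `H` is algebraically closed in `G`: every finite system of equations with constants
in `H` that has a solution in `G` has a solution in `H`. -/
def IsAlgClosedSubgroup {G : Type*} [Group G] (H : Subgroup G) : Prop :=
  ∀ (n m : ℕ) (w : Fin m → FreeGroup (Fin n ⊕ H)) (h : Fin m → H),
    (∃ g : Fin n → G, ∀ i, wordEval H (w i) g = h i) →
    ∃ g : Fin n → G, (∀ j, g j ∈ H) ∧ ∀ i, wordEval H (w i) g = h i

/-- `H` is verbally closed in `G`: every split equation `w(x₁,…,xₙ) = h`, `h ∈ H`,
solvable in `G` is solvable in `H`. -/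
def IsVerballyClosed {G : Type*} [Group G] (H : Subgroup G) : Prop :=
  ∀ (n : ℕ) (w : FreeGroup (Fin n)) (h : G), h ∈ H →
    (∃ g : Fin n → G, FreeGroup.lift g w = h) →
    ∃ g : Fin n → G, (∀ j, g j ∈ H) ∧ FreeGroup.lift g w = h

/-- `H` is `l`-verbally closed in `G`: every system of `l` split equations with right-hand
sides in `H` that is solvable in `G` is solvable in `H`. -/
def IsLVerballyClosed {G : Type*} [Group G] (H : Subgroup G) (l : ℕ) : Prop :=
  ∀ (n : ℕ) (w : Fin l → FreeGroup (Fin n)) (h : Fin l → G), (∀ i, h i ∈ H) →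
    (∃ g : Fin n → G, ∀ i, FreeGroup.lift g (w i) = h i) →
    ∃ g : Fin n → G, (∀ j, g j ∈ H) ∧ ∀ i, FreeGroup.lift g (w i) = h i

open scoped commutatorElement

lemma mem_commutator_exists_list {G : Type*} [Group G] {x : G} (hx : x ∈ commutator G) :
    ∃ L : List (G × G), (L.map fun p => ⁅p.1, p.2⁆).prod = x := by
  rw [commutator_def, Subgroup.commutator_def] at hx
  induction hx using Subgroup.closure_induction with
  | mem g hg =>
    obtain ⟨a, -, b, -, rfl⟩ := hg
    exact ⟨[(a, b)], by simp⟩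
  | one => exact ⟨[], by simp⟩
  | mul u v hu hv ihu ihv =>
    obtain ⟨L1, h1⟩ := ihu
    obtain ⟨L2, h2⟩ := ihv
    exact ⟨L1 ++ L2, by simp [h1, h2]⟩
  | inv u hu ihu =>
    obtain ⟨L, hL⟩ := ihu
    refine ⟨(L.map fun p => (p.2, p.1)).reverse, ?_⟩
    rw [← hL, List.prod_inv_reverse]
    simp [List.map_reverse, List.map_map, Function.comp_def]

lemma mem_commutator_exists_fin {G : Type*} [Group G] {x : G} (hx : x ∈ commutator G) :
    ∃ (m : ℕ) (a b : Fin m → G),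
      ((List.finRange m).map fun i => ⁅a i, b i⁆).prod = x := by
  obtain ⟨L, hL⟩ := mem_commutator_exists_list hx
  refine ⟨L.length, fun i => (L.get i).1, fun i => (L.get i).2, ?_⟩
  rw [← hL]
  conv_rhs => rw [← List.ofFn_get L]
  rw [List.map_ofFn, List.ofFn_eq_map]
  rfl

/-- The word `∏ i, ⁅xᵢ, yᵢ⁆` on `m + m` variables. -/
def commWord (m : ℕ) : FreeGroup (Fin (m + m)) :=
  ((List.finRange m).map fun i =>
    ⁅FreeGroup.of (Fin.castAdd m i), FreeGroup.of (Fin.natAdd m i)⁆).prod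

lemma lift_commWord {G : Type*} [Group G] {m : ℕ} (g : Fin (m + m) → G) :
    FreeGroup.lift g (commWord m) =
      ((List.finRange m).map fun i => ⁅g (Fin.castAdd m i), g (Fin.natAdd m i)⁆).prod := by
  rw [commWord, map_list_prod, List.map_map]
  congr 1
  simp [Function.comp_def, map_commutatorElement, FreeGroup.lift_apply_of]


/-- A verbally closed subgroup of a solvable group contained in the derived subgroup
is trivial. -/
theorem verballyClosed_le_commutator_eq_bot {G : Type*} [Group G] [Group.IsSolvable G]
    (H : Subgroup G) (hH : IsVerballyClosed H) (hle : H ≤ commutator G) : H = ⊥ := by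
  obtain ⟨N, hN⟩ := Group.IsSolvable.solvable (G := G)
  have hsub : ∀ k, H ≤ derivedSeries G k := by
    intro k
    induction k with
    | zero => exact le_top
    | succ k ih =>
      intro h hh
      obtain ⟨m, a, b, hprod⟩ := mem_commutator_exists_fin (hle hh)
      obtain ⟨g, hgH, hgw⟩ := hH (m + m) (commWord m) h hh
        ⟨Fin.append a b, by
          rw [lift_commWord]
          simp only [Fin.append_left, Fin.append_right]
          exact hprod⟩
      rw [derivedSeries_succ, ← hgw, lift_commWord]
      refine list_prod_mem ?_
      intro y hy
      simp only [List.mem_map, List.mem_finRange, true_and] at hy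
      obtain ⟨i, rfl⟩ := hy
      exact Subgroup.commutator_mem_commutator (ih (hgH _)) (ih (hgH _))
  exact le_bot_iff.mp (hN ▸ hsub N)
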